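/- For every ρ ≥ 1, the sequence (Γ(n+2)^ρ)_{n≥0} = (((n+1)!)^ρ)_{n≥0} belongs to the class 𝓜, i.e. it is increasing, has first term 1, and satisfies conditions (i1), (i2), (i3), (i4). -/

import Mathlib

open Filter

/-- Condition (i1): logarithmic convexity. -/
def CondI1 (L : ℕ → ℝ) : Prop := ∀ n : ℕ, (L (n + 1)) ^ 2 ≤ L n * L (n + 2)

/-- Condition (i2). -/
def CondI2 (L : ℕ → ℝ) : Prop :=
  ∃ H₁ : ℝ, 0 < H₁ ∧ ∃ H₂ : ℝ, 0 < H₂ ∧ ∀ n : ℕ, H₁ * H₂ ^ n * n.factorial ≤ L n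

/-- Condition (i3). -/
def CondI3 (L : ℕ → ℝ) : Prop :=
  ∀ s : ℝ, 1 < s →
    1 < Filter.liminf (fun n : ℕ => (L ⌊s * (n : ℝ)⌋₊ / (L n) ^ s) ^ ((1 : ℝ) / n)) Filter.atTop

/-- Condition (i4). -/
def CondI4 (L : ℕ → ℝ) : Prop :=
  ∀ δ : ℝ, 0 < δ → ∃ p : ℝ, 0 < p ∧ ∃ t : ℝ, 1 < t ∧
    ∀ n m : ℕ, L (m + n) / (L m * (1 + δ) ^ m) ≤ p * t ^ n * L n

/-- The class 𝓜 of increasing sequences of positive reals with first term 1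
satisfying (i1)-(i4). -/
def ClassM (L : ℕ → ℝ) : Prop :=
  (∀ n, 0 < L n) ∧ Monotone L ∧ L 0 = 1 ∧ CondI1 L ∧ CondI2 L ∧ CondI3 L ∧ CondI4 L



lemma fac_lb (n : ℕ) : (n:ℝ)^n ≤ n.factorial * Real.exp n := by
  have h1 : (n:ℝ)^n / n.factorial ≤ Real.exp n := by
    refine le_trans ?_ (Real.sum_le_exp_of_nonneg (by positivity) (n+1))
    exact Finset.single_le_sum (f := fun i => (n:ℝ)^i / i.factorial)
      (fun i _ => by positivity) (Finset.self_mem_range_succ n)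
  have h2 : (0:ℝ) < n.factorial := by exact_mod_cast n.factorial_pos
  calc (n:ℝ)^n = (n:ℝ)^n / n.factorial * n.factorial := by field_simp
  _ ≤ Real.exp n * n.factorial := by apply mul_le_mul_of_nonneg_right h1 h2.le
  _ = n.factorial * Real.exp n := by ring

lemma exp_mul_pow_le (n : ℕ) (hn : 1 ≤ n) : Real.exp 1 * (n:ℝ)^(n+1) ≤ ((n:ℝ)+1)^(n+1) := by
  have hn0 : (0:ℝ) < n := by exact_mod_cast hn
  have h1 : Real.exp (1/((n:ℝ)+1)) ≤ ((n:ℝ)+1)/n := by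
    have h := Real.add_one_le_exp (-(1/((n:ℝ)+1)))
    have h2 : (n:ℝ)/((n:ℝ)+1) ≤ Real.exp (-(1/((n:ℝ)+1))) := by
      have he : -(1/((n:ℝ)+1)) + 1 = (n:ℝ)/((n:ℝ)+1) := by field_simp; ring
      linarith [he ▸ h]
    rw [Real.exp_neg] at h2
    rw [le_div_iff₀ hn0]
    have h3 : (n:ℝ)/((n:ℝ)+1) * Real.exp (1/((n:ℝ)+1)) ≤ 1 := by
      calc (n:ℝ)/((n:ℝ)+1) * Real.exp (1/((n:ℝ)+1))
          ≤ (Real.exp (1/((n:ℝ)+1)))⁻¹ * Real.exp (1/((n:ℝ)+1)) := by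
            apply mul_le_mul_of_nonneg_right h2 (Real.exp_pos _).le
      _ = 1 := inv_mul_cancel₀ (Real.exp_ne_zero _)
    have h4 : (0:ℝ) < (n:ℝ)+1 := by positivity
    have h5 := mul_le_mul_of_nonneg_right h3 h4.le
    have h6 : (n:ℝ)/((n:ℝ)+1) * Real.exp (1/((n:ℝ)+1)) * ((n:ℝ)+1)
        = Real.exp (1/((n:ℝ)+1)) * n := by field_simp
    rw [h6, one_mul] at h5
    linarith
  calc Real.exp 1 * (n:ℝ)^(n+1) = (Real.exp (1/((n:ℝ)+1)))^(n+1) * (n:ℝ)^(n+1) := by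
        rw [← Real.exp_nat_mul]
        congr 1
        rw [Nat.cast_add_one, mul_one_div, div_self (by positivity : ((n:ℝ)+1) ≠ 0)]
  _ = (Real.exp (1/((n:ℝ)+1)) * n)^(n+1) := by rw [mul_pow]
  _ ≤ (((n:ℝ)+1)/n * n)^(n+1) := by
        apply pow_le_pow_left₀ (by positivity)
        apply mul_le_mul_of_nonneg_right h1 hn0.le
  _ = ((n:ℝ)+1)^(n+1) := by rw [div_mul_cancel₀]; exact hn0.ne'

lemma fac_ub (n : ℕ) (hn : 1 ≤ n) : (n.factorial : ℝ) * Real.exp n ≤ Real.exp 1 * (n:ℝ)^(n+1) := by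
  induction n with
  | zero => omega
  | succ m ih =>
    rcases Nat.eq_zero_or_pos m with hm | hm
    · subst hm; norm_num [Nat.factorial]
    · have ihm := ih hm
      have hm0 : (0:ℝ) < m := by exact_mod_cast hm
      have key := exp_mul_pow_le m hm
      have e1 : ((m+1).factorial : ℝ) * Real.exp ((m:ℝ)+1)
          = ((m:ℝ)+1) * Real.exp 1 * ((m.factorial:ℝ) * Real.exp m) := by
        rw [Nat.factorial_succ]
        push_cast
        rw [Real.exp_add]
        ring
      push_cast
      rw [e1]
      calc ((m:ℝ)+1) * Real.exp 1 * ((m.factorial:ℝ) * Real.exp m)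
          ≤ ((m:ℝ)+1) * Real.exp 1 * (Real.exp 1 * (m:ℝ)^(m+1)) := by
            apply mul_le_mul_of_nonneg_left ihm (by positivity)
      _ = ((m:ℝ)+1) * (Real.exp 1 * (Real.exp 1 * (m:ℝ)^(m+1))) := by ring
      _ ≤ ((m:ℝ)+1) * (Real.exp 1 * ((m:ℝ)+1)^(m+1)) := by
            apply mul_le_mul_of_nonneg_left _ (by positivity)
            exact mul_le_mul_of_nonneg_left key (Real.exp_pos 1).le
      _ = Real.exp 1 * ((m:ℝ)+1)^(m+2) := by ring



lemma log_fac_lb (n : ℕ) (hn : 1 ≤ n) :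
    (n:ℝ) * Real.log n - n ≤ Real.log n.factorial := by
  have hn0 : (0:ℝ) < n := by exact_mod_cast hn
  have hf : (0:ℝ) < n.factorial := by exact_mod_cast n.factorial_pos
  have h := Real.log_le_log (by positivity) (fac_lb n)
  rw [Real.log_pow, Real.log_mul hf.ne' (Real.exp_ne_zero _), Real.log_exp] at h
  linarith

lemma log_fac_ub (n : ℕ) (hn : 1 ≤ n) :
    Real.log n.factorial ≤ 1 + ((n:ℝ)+1) * Real.log n - n := by
  have hn0 : (0:ℝ) < n := by exact_mod_cast hn
  have hf : (0:ℝ) < n.factorial := by exact_mod_cast n.factorial_pos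
  have h := Real.log_le_log (by positivity) (fac_ub n hn)
  rw [Real.log_mul hf.ne' (Real.exp_ne_zero _), Real.log_exp,
    Real.log_mul (Real.exp_ne_zero _) (by positivity), Real.log_exp, Real.log_pow] at h
  push_cast at h
  linarith

lemma phi_mono {a b : ℝ} (ha : 1 ≤ a) (hab : a ≤ b) :
    a * Real.log a - a ≤ b * Real.log b - b := by
  have ha0 : (0:ℝ) < a := lt_of_lt_of_le one_pos ha
  have hb0 : (0:ℝ) < b := lt_of_lt_of_le ha0 hab
  have h1 : Real.log (a/b) ≤ a/b - 1 := Real.log_le_sub_one_of_pos (by positivity)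
  rw [Real.log_div ha0.ne' hb0.ne'] at h1
  have h2 : b - a ≤ b * (Real.log b - Real.log a) := by
    have h := mul_le_mul_of_nonneg_left h1 hb0.le
    have hba : b * (a/b) = a := by field_simp
    nlinarith
  have h3 : 0 ≤ (b - a) * Real.log a := by
    apply mul_nonneg (by linarith) (Real.log_nonneg ha)
  nlinarith

lemma key_i3 (s : ℝ) (hs : 1 < s) (n : ℕ) (hn : 1 ≤ n) :
    s*(n:ℝ)*Real.log s - s - 2*s*Real.log ((n:ℝ)+1)
      ≤ Real.log ((⌊s*(n:ℝ)⌋₊+1).factorial) - s * Real.log ((n+1).factorial) := by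
  set k : ℕ := ⌊s*(n:ℝ)⌋₊ with hk
  have hn0 : (0:ℝ) < n := by exact_mod_cast hn
  have hs0 : (0:ℝ) < s := by linarith
  have hn1 : (1:ℝ) ≤ (n:ℝ) := by exact_mod_cast hn
  have hsn1 : 1 ≤ s*(n:ℝ) := by nlinarith
  have hkc : s*(n:ℝ) ≤ (k:ℝ)+1 := (Nat.lt_floor_add_one _).le
  have hk1 : 1 ≤ k+1 := by omega
  -- lower bound for log (k+1)!
  have hlb : s*(n:ℝ)*Real.log (s*(n:ℝ)) - s*(n:ℝ) ≤ Real.log ((k+1).factorial) := by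
    have h1 := log_fac_lb (k+1) hk1
    have h2 : s*(n:ℝ)*Real.log (s*(n:ℝ)) - s*(n:ℝ)
        ≤ ((k:ℝ)+1)*Real.log ((k:ℝ)+1) - ((k:ℝ)+1) := phi_mono hsn1 hkc
    have hc : ((k+1:ℕ):ℝ) = (k:ℝ)+1 := by push_cast; ring
    rw [hc] at h1
    linarith
  -- upper bound for log (n+1)!
  have hub : Real.log ((n+1).factorial) ≤ 1 + ((n:ℝ)+2) * Real.log ((n:ℝ)+1) - ((n:ℝ)+1) := by
    have h1 := log_fac_ub (n+1) (by omega)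
    have hc : ((n+1:ℕ):ℝ) = (n:ℝ)+1 := by push_cast; ring
    rw [hc] at h1
    linarith
  -- log(sn) = log s + log n
  have hlsn : Real.log (s*(n:ℝ)) = Real.log s + Real.log n :=
    Real.log_mul hs0.ne' hn0.ne'
  -- n * log(n+1) - n * log n ≤ 1
  have hll : (n:ℝ) * Real.log ((n:ℝ)+1) - (n:ℝ) * Real.log n ≤ 1 := by
    have h1 : Real.log (((n:ℝ)+1)/n) ≤ ((n:ℝ)+1)/n - 1 :=
      Real.log_le_sub_one_of_pos (by positivity)
    rw [Real.log_div (by positivity) hn0.ne'] at h1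
    have h2 : ((n:ℝ)+1)/n - 1 = 1/n := by field_simp; ring
    rw [h2] at h1
    have h3 := mul_le_mul_of_nonneg_left h1 hn0.le
    rw [mul_one_div, div_self hn0.ne'] at h3
    linarith [mul_sub (n:ℝ) (Real.log ((n:ℝ)+1)) (Real.log n) ▸ h3]
  have hmul := mul_le_mul_of_nonneg_left hub hs0.le
  have expand : s*(n:ℝ)*Real.log (s*(n:ℝ)) - s*(n:ℝ)
      = s*(n:ℝ)*Real.log s + s*((n:ℝ)*Real.log n) - s*(n:ℝ) := by
    rw [hlsn]; ring
  have hll' : s*((n:ℝ)*Real.log n) ≥ s*((n:ℝ)*Real.log ((n:ℝ)+1)) - s := by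
    nlinarith
  nlinarith [hlb, hmul, hll']

lemma pow_rpow_comm {x : ℝ} (hx : 0 ≤ x) (N : ℕ) (ρ : ℝ) : (x^N)^ρ = (x^ρ)^N := by
  rw [← Real.rpow_natCast x N, ← Real.rpow_mul hx, mul_comm, Real.rpow_mul hx,
    Real.rpow_natCast]

lemma choose_le_aux (N n : ℕ) (hn : n ≤ N) {ε : ℝ} (hε : 0 < ε) :
    (N.choose n : ℝ) * ε^n ≤ (1+ε)^N := by
  have h := add_pow ε 1 N
  have hmem : n ∈ Finset.range (N+1) := Finset.mem_range.mpr (by omega)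
  have hsingle := Finset.single_le_sum
    (f := fun k => ε^k * 1^(N-k) * (N.choose k : ℝ)) (fun i _ => by positivity) hmem
  calc (N.choose n : ℝ) * ε^n = ε^n * 1^(N-n) * (N.choose n : ℝ) := by ring
  _ ≤ ∑ k ∈ Finset.range (N+1), ε^k * 1^(N-k) * (N.choose k : ℝ) := hsingle
  _ = (ε+1)^N := h.symm
  _ = (1+ε)^N := by ring


set_option maxHeartbeats 2000000 in
theorem stmt_8 (ρ : ℝ) (hρ : 1 ≤ ρ) :
    ClassM (fun n : ℕ => (Real.Gamma ((n : ℝ) + 2)) ^ ρ) := by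
  have hρ0 : (0:ℝ) < ρ := lt_of_lt_of_le one_pos hρ
  have hfun : (fun n : ℕ => (Real.Gamma ((n : ℝ) + 2)) ^ ρ)
      = fun n : ℕ => (((n+1).factorial : ℝ)) ^ ρ := by
    funext n
    have h2 : ((n:ℝ)+2) = ((n+1:ℕ):ℝ)+1 := by push_cast; ring
    rw [h2, Real.Gamma_nat_eq_factorial]
  rw [hfun]
  set F : ℕ → ℝ := fun n => ((n+1).factorial : ℝ) with hF
  have hFpos : ∀ n, (0:ℝ) < F n := fun n => by
    show (0:ℝ) < ((n+1).factorial : ℝ); exact_mod_cast (n+1).factorial_pos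
  have hF1 : ∀ n, (1:ℝ) ≤ F n := fun n => by
    show (1:ℝ) ≤ ((n+1).factorial : ℝ)
    exact_mod_cast Nat.one_le_iff_ne_zero.mpr (n+1).factorial_ne_zero
  have hFmono : Monotone F := by
    intro a b hab
    show ((a+1).factorial : ℝ) ≤ ((b+1).factorial : ℝ)
    exact_mod_cast Nat.factorial_le (by omega)
  set L : ℕ → ℝ := fun n => F n ^ ρ with hL
  have hLpos : ∀ n, 0 < L n := fun n => Real.rpow_pos_of_pos (hFpos n) ρ
  refine ⟨hLpos, ?_, ?_, ?_, ?_, ?_, ?_⟩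
  · -- Monotone
    intro a b hab
    exact Real.rpow_le_rpow (hFpos a).le (hFmono hab) hρ0.le
  · -- L 0 = 1
    show F 0 ^ ρ = 1
    have : F 0 = 1 := by norm_num [hF, Nat.factorial]
    rw [this, Real.one_rpow]
  · -- i1
    intro n
    show (F (n+1) ^ ρ)^2 ≤ F n ^ ρ * (F (n+2) ^ ρ)
    have hbase : F (n+1) ^ 2 ≤ F n * F (n+2) := by
      have : (n+2).factorial * (n+2).factorial ≤ (n+1).factorial * (n+3).factorial := by
        have e2 : (n+2).factorial = (n+2) * (n+1).factorial := Nat.factorial_succ _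
        have e3 : (n+3).factorial = (n+3) * (n+2).factorial := Nat.factorial_succ _
        calc (n+2).factorial * (n+2).factorial = (n+2) * ((n+1).factorial * (n+2).factorial) := by
              rw [e2]; ring
        _ ≤ (n+3) * ((n+1).factorial * (n+2).factorial) :=
              Nat.mul_le_mul_right _ (by omega)
        _ = (n+1).factorial * (n+3).factorial := by rw [e3]; ring
      have := (Nat.cast_le (α := ℝ)).mpr this
      push_cast at this
      show F (n+1) ^ 2 ≤ F n * F (n+2)
      simp only [hF]
      rw [sq]
      convert this using 2 <;> push_cast <;> ring_nf
    calc (F (n+1) ^ ρ)^2 = (F (n+1) ^ 2) ^ ρ := (pow_rpow_comm (hFpos _).le 2 ρ).symm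
    _ ≤ (F n * F (n+2)) ^ ρ := Real.rpow_le_rpow (by positivity) hbase hρ0.le
    _ = F n ^ ρ * F (n+2) ^ ρ := Real.mul_rpow (hFpos n).le (hFpos _).le
  · -- i2
    refine ⟨1, one_pos, 1, one_pos, fun n => ?_⟩
    rw [one_mul, one_pow, one_mul]
    calc (n.factorial : ℝ) ≤ F n := by
          show (n.factorial : ℝ) ≤ ((n+1).factorial : ℝ)
          exact_mod_cast Nat.factorial_le (by omega)
    _ = F n ^ (1:ℝ) := (Real.rpow_one _).symm
    _ ≤ F n ^ ρ := Real.rpow_le_rpow_of_exponent_le (hF1 n) hρ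
  · -- i3
    intro s hs
    have hs0 : (0:ℝ) < s := by linarith
    have hG : 0 < Real.log s := Real.log_pos hs
    set b := s * Real.log s with hb
    have hbpos : 0 < b := mul_pos hs0 hG
    set C := 1 + (s+2)*Real.log s + b/(2*s) + 2*s with hC
    clear_value b C
    have hlittle : ∀ᶠ n : ℕ in atTop,
        ‖Real.log ((n:ℝ)+1)‖ ≤ b/(8*s) * ‖(n:ℝ)+1‖ := by
      have h2 := (Asymptotics.isLittleO_iff.mp Real.isLittleO_log_id_atTop)
        (show (0:ℝ) < b/(8*s) by positivity)
      have ht : Tendsto (fun n : ℕ => (n:ℝ)+1) atTop atTop :=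
        tendsto_atTop_add_const_right _ 1 tendsto_natCast_atTop_atTop
      exact (ht.eventually h2).mono (fun n hn => by simpa using hn)
    have hn4 : ∀ᶠ n : ℕ in atTop, 4*s/b ≤ (n:ℝ) :=
      tendsto_natCast_atTop_atTop.eventually (eventually_ge_atTop _)
    have hboth : ∀ᶠ n : ℕ in atTop,
        Real.exp (b/4) ≤ (L ⌊s*(n:ℝ)⌋₊ / (L n) ^ s) ^ ((1:ℝ)/n) ∧
        (L ⌊s*(n:ℝ)⌋₊ / (L n) ^ s) ^ ((1:ℝ)/n) ≤ Real.exp (ρ*C) := by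
      filter_upwards [hlittle, hn4, eventually_ge_atTop 1] with n h1 h4 hn1
      have hn1R : (1:ℝ) ≤ n := by exact_mod_cast hn1
      have hn0 : (0:ℝ) < n := by linarith
      set k := ⌊s*(n:ℝ)⌋₊ with hk
      have hkle : (k:ℝ) ≤ s*n := Nat.floor_le (by positivity)
      have hkc : s*(n:ℝ) ≤ (k:ℝ)+1 := (Nat.lt_floor_add_one _).le
      have hk0 : (0:ℝ) ≤ (k:ℝ) := Nat.cast_nonneg k
      have hFkpos : (0:ℝ) < F k := hFpos k
      have hFnpos : (0:ℝ) < F n := hFpos n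
      have hRpos : (0:ℝ) < F k / F n ^ s := by positivity
      have habs : Real.log ((n:ℝ)+1) ≤ b/(8*s) * ((n:ℝ)+1) := by
        have h := le_trans (le_abs_self _) h1
        rwa [Real.norm_eq_abs, abs_of_nonneg (by positivity : (0:ℝ) ≤ (n:ℝ)+1)] at h
      have hP : 0 ≤ Real.log ((n:ℝ)+1) := Real.log_nonneg (by linarith)
      have hQ : 0 ≤ Real.log ((k:ℝ)+1) := Real.log_nonneg (by linarith)
      have hFkfac : F k = ((k+1).factorial : ℝ) := rfl
      have hFnfac : F n = ((n+1).factorial : ℝ) := rfl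
      have hlogR : Real.log (F k / F n ^ s)
          = Real.log ((k+1).factorial) - s * Real.log ((n+1).factorial) := by
        rw [Real.log_div hFkpos.ne' (by positivity), Real.log_rpow hFnpos, hFkfac, hFnfac]
      have heq : L k / (L n) ^ s = (F k / F n ^ s) ^ ρ := by
        show F k ^ ρ / (F n ^ ρ) ^ s = _
        rw [← Real.rpow_mul hFnpos.le ρ s, mul_comm ρ s, Real.rpow_mul hFnpos.le s ρ,
          ← Real.div_rpow hFkpos.le (Real.rpow_nonneg hFnpos.le s)]
      constructor
      · -- lower bound
        have hkey := key_i3 s hs n hn1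
        rw [← hk] at hkey
        have h2s : 2*s*Real.log ((n:ℝ)+1) ≤ b/4*((n:ℝ)+1) := by
          have h := mul_le_mul_of_nonneg_left habs (by positivity : (0:ℝ) ≤ 2*s)
          have he : 2*s*(b/(8*s) * ((n:ℝ)+1)) = b/4*((n:ℝ)+1) := by
            field_simp; ring
          linarith [he ▸ h]
        have hns : s ≤ b/4 * n := by
          rw [div_le_iff₀ hbpos] at h4
          nlinarith
        have hb4 : b/4 ≤ b/4 * n := by nlinarith
        have hlb : b/4 * (n:ℝ) ≤ Real.log (F k / F n ^ s) := by
          rw [hlogR]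
          have hbn : s*(n:ℝ)*Real.log s = b*n := by rw [hb]; ring
          linarith
        have hexp : Real.exp (b/4 * n) ≤ F k / F n ^ s := by
          have h := Real.exp_le_exp.mpr hlb
          rwa [Real.exp_log hRpos] at h
        have hR1 : (1:ℝ) ≤ F k / F n ^ s := by
          refine le_trans ?_ hexp
          rw [← Real.exp_zero]
          exact Real.exp_le_exp.mpr (by positivity)
        calc Real.exp (b/4)
            = (Real.exp (b/4 * n)) ^ ((1:ℝ)/n) := by
              rw [← Real.exp_mul]
              congr 1
              field_simp
        _ ≤ (F k / F n ^ s) ^ ((1:ℝ)/n) :=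
              Real.rpow_le_rpow (Real.exp_pos _).le hexp (by positivity)
        _ ≤ (F k / F n ^ s) ^ (ρ*(1/(n:ℝ))) := by
              apply Real.rpow_le_rpow_of_exponent_le hR1
              calc (1:ℝ)/↑n = 1*(1/↑n) := by ring
              _ ≤ ρ*(1/↑n) := mul_le_mul_of_nonneg_right hρ (by positivity)
        _ = (L k / (L n) ^ s) ^ ((1:ℝ)/n) := by
              rw [heq, ← Real.rpow_mul hRpos.le]
      · -- upper bound
        have hfub := log_fac_ub (k+1) (by omega)
        have hflb := log_fac_lb (n+1) (by omega)
        push_cast at hfub hflb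
        have hlog1 : Real.log ((k:ℝ)+1) ≤ Real.log s + Real.log ((n:ℝ)+1) := by
          rw [← Real.log_mul hs0.ne' (by positivity : ((n:ℝ)+1) ≠ 0)]
          apply Real.log_le_log (by linarith)
          nlinarith
        have hstep1 : ((k:ℝ)+1+1) * Real.log ((k:ℝ)+1)
            ≤ (s*n+2) * (Real.log s + Real.log ((n:ℝ)+1)) := by
          apply mul_le_mul (by linarith) hlog1 hQ (by nlinarith)
        have hsB : s*(((n:ℝ)+1)*Real.log ((n:ℝ)+1) - ((n:ℝ)+1))
            ≤ s * Real.log ((n+1).factorial) := by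
          exact mul_le_mul_of_nonneg_left hflb hs0.le
        have h2P' : 2*Real.log ((n:ℝ)+1) ≤ b/(2*s)*n := by
          have h := habs
          have hq : b/(8*s) * ((n:ℝ)+1) ≤ b/(8*s) * (2*n) := by
            apply mul_le_mul_of_nonneg_left (by linarith) (by positivity)
          have he : 2*(b/(8*s) * (2*(n:ℝ))) = b/(2*s)*n := by field_simp; ring
          nlinarith
        have hG2 : Real.log s ≤ (n:ℝ)*Real.log s := by nlinarith
        have hC2 : Real.log ((k+1).factorial) - s * Real.log ((n+1).factorial) ≤ C * n := by
          have hexpand : (s*(n:ℝ)+2) * (Real.log s + Real.log ((n:ℝ)+1))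
              = s*n*Real.log s + 2*Real.log s + s*n*Real.log ((n:ℝ)+1)
                + 2*Real.log ((n:ℝ)+1) := by ring
          have hsn : s ≤ s*(n:ℝ) := by nlinarith
          have hCn : C * n = n + s*n*Real.log s + 2*(n*Real.log s) + b/(2*s)*n + 2*(s*n) := by
            rw [hC]; ring
          have hsP : 0 ≤ s * Real.log ((n:ℝ)+1) := by positivity
          nlinarith [hfub, hsB, hstep1, h2P', hG2, hsn, hsP, hk0, hP, hCn, hn0.le]
        have hE : (L k / (L n) ^ s) ^ ((1:ℝ)/n)
            = Real.exp ((ρ * Real.log (F k / F n ^ s)) * (1/n)) := by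
          rw [heq, Real.rpow_def_of_pos (Real.rpow_pos_of_pos hRpos ρ), Real.log_rpow hRpos]
        rw [hE]
        apply Real.exp_le_exp.mpr
        have hstep : Real.log (F k / F n ^ s) * (1/n) ≤ C := by
          rw [hlogR]
          have h := mul_le_mul_of_nonneg_right hC2 (by positivity : (0:ℝ) ≤ 1/n)
          have he : C * n * (1/n) = C := by field_simp
          linarith
        calc ρ * Real.log (F k / F n ^ s) * (1/(n:ℝ))
            = ρ * (Real.log (F k / F n ^ s) * (1/n)) := by ring
        _ ≤ ρ * C := by
              apply mul_le_mul_of_nonneg_left hstep hρ0.le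
    refine lt_of_lt_of_le ?_ (Filter.le_liminf_of_le
      (Filter.isCoboundedUnder_ge_of_eventually_le _ (hboth.mono (fun n h => h.2)))
      (hboth.mono (fun n h => h.1)))
    rw [← Real.exp_zero]
    exact Real.exp_lt_exp.mpr (by positivity)
  · -- i4
    intro δ hδ
    have h1δ : (1:ℝ) < 1+δ := by linarith
    set ε := (1+δ)^((1:ℝ)/ρ) - 1 with hε
    have hεpos : 0 < ε := by
      have : 1 < (1+δ)^((1:ℝ)/ρ) :=
        (Real.one_lt_rpow_iff_of_pos (by linarith)).mpr (Or.inl ⟨h1δ, by positivity⟩)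
      simp only [hε]; linarith
    have hrec : (1+ε)^ρ = 1+δ := by
      have h1 : 1 + ε = (1+δ)^((1:ℝ)/ρ) := by simp only [hε]; ring
      rw [h1, ← Real.rpow_mul (by linarith : (0:ℝ) ≤ 1+δ),
        one_div_mul_cancel hρ0.ne', Real.rpow_one]
    have hεrpos : 0 < ε^ρ := Real.rpow_pos_of_pos hεpos ρ
    have hεδ : ε^ρ < 1+δ := by
      rw [← hrec]
      exact Real.rpow_lt_rpow hεpos.le (by simp only [hε]; linarith) hρ0
    refine ⟨1+δ, by linarith, (1+δ)/ε^ρ, ?_, ?_⟩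
    · rw [lt_div_iff₀ hεrpos]; linarith
    intro n m
    have hNat : F (m+n) * ε^n ≤ (1+ε)^(m+n+1) * (F n * F m) := by
      have hch : ((m+n+1).choose n : ℝ) * ε^n ≤ (1+ε)^(m+n+1) :=
        choose_le_aux _ _ (by omega) hεpos
      have hid : (m+n+1).choose n * n.factorial * (m+1).factorial = (m+n+1).factorial := by
        have h := Nat.choose_mul_factorial_mul_factorial (show n ≤ m+n+1 by omega)
        simpa [show m+n+1-n = m+1 by omega] using h
      have hidR : ((m+n+1).factorial : ℝ) = ((m+n+1).choose n : ℝ) * n.factorial * (m+1).factorial := by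
        exact_mod_cast hid.symm
      have hfle : (n.factorial : ℝ) ≤ (n+1).factorial := by
        exact_mod_cast Nat.factorial_le (show n ≤ n+1 by omega)
      have hFmn : F (m+n) = ((m+n+1).factorial : ℝ) := rfl
      rw [hFmn, hidR]
      have hc0 : (0:ℝ) ≤ ((m+n+1).choose n : ℝ) := by positivity
      calc ((m+n+1).choose n : ℝ) * n.factorial * (m+1).factorial * ε^n
          = (((m+n+1).choose n : ℝ) * ε^n) * (n.factorial * (m+1).factorial) := by ring
      _ ≤ (1+ε)^(m+n+1) * (n.factorial * (m+1).factorial) := by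
            apply mul_le_mul_of_nonneg_right hch (by positivity)
      _ ≤ (1+ε)^(m+n+1) * (((n+1).factorial : ℝ) * (m+1).factorial) := by
            apply mul_le_mul_of_nonneg_left _ (by positivity)
            apply mul_le_mul_of_nonneg_right hfle (by positivity)
      _ = (1+ε)^(m+n+1) * (F n * F m) := rfl
    have hmain : L (m+n) * (ε^ρ)^n ≤ (1+δ)^(m+n+1) * (L n * L m) := by
      have hr := Real.rpow_le_rpow (by positivity) hNat hρ0.le
      rw [Real.mul_rpow (hFpos _).le (by positivity),
        Real.mul_rpow (by positivity) (by positivity),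
        Real.mul_rpow (hFpos _).le (hFpos _).le,
        pow_rpow_comm hεpos.le, pow_rpow_comm (by positivity : (0:ℝ) ≤ 1+ε), hrec] at hr
      exact hr
    have hdenpos : 0 < L m * (1+δ)^m := by positivity
    rw [div_le_iff₀ hdenpos]
    have hcancel : (1+δ) * ((1+δ)/ε^ρ)^n * L n * (L m * (1+δ)^m) * (ε^ρ)^n
        = (1+δ)^(m+n+1) * (L n * L m) := by
      rw [div_pow]
      field_simp
      ring
    have hfin : L (m+n) * (ε^ρ)^n ≤ ((1+δ) * ((1+δ)/ε^ρ)^n * L n * (L m * (1+δ)^m)) * (ε^ρ)^n := by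
      rw [hcancel]; exact hmain
    exact le_of_mul_le_mul_right hfin (by positivity)
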